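/- Let M = (Q, A, τ) be a self-invertible Mealy automaton and let u ∈ A* be a nonempty word. Then the following are equivalent: (1) the orbit P_M·u^ω = { s·u^ω : s ∈ Q* } is finite; (2) the number of ~A-equivalence classes met by the sets { s·uⁿ : s ∈ Q* } is bounded independently of n; (3) the number of ~D-equivalence classes met by { s·uⁿ : s ∈ Q* } is bounded independently of n; (4) the union ⋃_{n ≥ 0} { s·uⁿ : s ∈ Q* } meets only finitely many ~A-classes; (5) that union meets only finitely many ~D-classes; (6) the image of u in D_M = A*/~A has finite order; (7) the image of u in D'_M = A*/~D has finite order. -/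

import Mathlib

namespace AutGrp

/-- A Mealy automaton with state set `Q` and alphabet `A`:
`step q a = (q · a, q @ a)` (output letter, next state). -/
structure Mealy (Q A : Type*) where
  step : Q → A → A × Q

namespace Mealy

variable {Q A : Type*}

/-- The output letter `q · a`. -/
def o (M : Mealy Q A) (q : Q) (a : A) : A := (M.step q a).1

/-- The next state `q @ a`. -/
def t (M : Mealy Q A) (q : Q) (a : A) : Q := (M.step q a).2

/-- Action of a single state on a word of letters: `q · w`. -/
def actA (M : Mealy Q A) : Q → List A → List A
  | _, [] => []
  | q, a :: w => M.o q a :: M.actA (M.t q a) w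

/-- State reached from `q` after reading the word `w`: `q @ w`. -/
def stA (M : Mealy Q A) : Q → List A → Q
  | q, [] => q
  | q, a :: w => M.stA (M.t q a) w

/-- Action of a word of states on a word of letters: `s · u` (rightmost state acts first). -/
def actW (M : Mealy Q A) : List Q → List A → List A
  | [], u => u
  | q :: s, u => M.actA q (M.actW s u)

/-- Word of states reached after reading `u`: `s @ u`. -/
def stW (M : Mealy Q A) : List Q → List A → List Q
  | [], _ => []
  | q :: s, u => M.stA q (M.actW s u) :: M.stW s u

/-- `M` is invertible if each state acts on `A` by a bijection. -/
def Invertible (M : Mealy Q A) : Prop := ∀ q : Q, Function.Bijective (M.o q)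

/-- `M` is reversible if each letter acts on `Q` by a bijection. -/
def Reversible (M : Mealy Q A) : Prop := ∀ a : A, Function.Bijective (fun q => M.t q a)

theorem actA_append (M : Mealy Q A) (q : Q) (x y : List A) :
    M.actA q (x ++ y) = M.actA q x ++ M.actA (M.stA q x) y := by
  induction x generalizing q with
  | nil => simp [actA, stA]
  | cons a w ih => simp [actA, stA, ih]

theorem stA_append (M : Mealy Q A) (q : Q) (x y : List A) :
    M.stA q (x ++ y) = M.stA (M.stA q x) y := by
  induction x generalizing q with
  | nil => simp [stA]
  | cons a w ih => simp [stA, ih]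

theorem actW_append_states (M : Mealy Q A) (s u : List Q) (w : List A) :
    M.actW (s ++ u) w = M.actW s (M.actW u w) := by
  induction s with
  | nil => simp [actW]
  | cons q s ih => simp [actW, ih]

theorem actW_append (M : Mealy Q A) (s : List Q) (x y : List A) :
    M.actW s (x ++ y) = M.actW s x ++ M.actW (M.stW s x) y := by
  induction s with
  | nil => simp [actW, stW]
  | cons q s ih => simp [actW, stW, ih, actA_append]

theorem stW_append (M : Mealy Q A) (s : List Q) (x y : List A) :
    M.stW s (x ++ y) = M.stW (M.stW s x) y := by
  induction s with
  | nil => simp [stW]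
  | cons q s ih => simp [stW, actW, ih, actW_append, stA_append]

theorem actW_stW_congr (M : Mealy Q A) {p p' : List Q}
    (h : ∀ w : List A, M.actW p w = M.actW p' w) (u w : List A) :
    M.actW (M.stW p u) w = M.actW (M.stW p' u) w := by
  have h1 := M.actW_append p u w
  have h2 := M.actW_append p' u w
  rw [h u, h (u ++ w)] at h1
  rw [h1] at h2
  exact List.append_cancel_left h2

/-- The congruence `~Q` on the free monoid `Q*`: two words of states are equivalent
iff they act identically on `A*`. -/
def conQ (M : Mealy Q A) : Con (FreeMonoid Q) where
  r s u := ∀ w : List A, M.actW s.toList w = M.actW u.toList w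
  iseqv := ⟨fun _ _ => rfl, fun h w => (h w).symm, fun h1 h2 w => (h1 w).trans (h2 w)⟩
  mul' := by
    intro a b c d h1 h2 w
    simp only [FreeMonoid.toList_mul, actW_append_states]
    rw [h2 w, h1 (M.actW d.toList w)]

/-- The congruence `~A` on the free monoid `A*`: `u ~A v` iff `s @ u = s @ v` for all `s ∈ Q*`. -/
def conA (M : Mealy Q A) : Con (FreeMonoid A) where
  r u v := ∀ s : List Q, M.stW s u.toList = M.stW s v.toList
  iseqv := ⟨fun _ _ => rfl, fun h s => (h s).symm, fun h1 h2 s => (h1 s).trans (h2 s)⟩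
  mul' := by
    intro a b c d h1 h2 s
    simp only [FreeMonoid.toList_mul, stW_append]
    rw [h1 s, h2 (M.stW s b.toList)]

/-- The congruence `~D` on the free monoid `A*`: `u ~D v` iff `s @ u ~Q s @ v` for all `s ∈ Q*`. -/
def conD (M : Mealy Q A) : Con (FreeMonoid A) where
  r u v := ∀ (s : List Q) (w : List A),
    M.actW (M.stW s u.toList) w = M.actW (M.stW s v.toList) w
  iseqv := ⟨fun _ _ _ => rfl, fun h s w => (h s w).symm,
    fun h1 h2 s w => (h1 s w).trans (h2 s w)⟩
  mul' := by
    intro a b c d h1 h2 s w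
    simp only [FreeMonoid.toList_mul, stW_append]
    calc M.actW (M.stW (M.stW s a.toList) c.toList) w
        = M.actW (M.stW (M.stW s b.toList) c.toList) w :=
          M.actW_stW_congr (h1 s) c.toList w
      _ = M.actW (M.stW (M.stW s b.toList) d.toList) w := h2 _ w

/-- The automaton semigroup (monoid) `P_M = Q* / ~Q`. -/
abbrev PM (M : Mealy Q A) : Type _ := M.conQ.Quotient

/-- The dual automaton semigroup (monoid) `D_M = A* / ~A`. -/
abbrev DM (M : Mealy Q A) : Type _ := M.conA.Quotient

/-- The monoid `D'_M = A* / ~D`. -/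
abbrev DM' (M : Mealy Q A) : Type _ := M.conD.Quotient

/-- The class in `P_M` of a word of states. -/
def PMmk (M : Mealy Q A) (s : List Q) : M.PM := M.conQ.mk' (FreeMonoid.ofList s)

/-- The class in `D_M` of a word of letters. -/
def DMmk (M : Mealy Q A) (u : List A) : M.DM := M.conA.mk' (FreeMonoid.ofList u)

/-- The class in `D'_M` of a word of letters. -/
def DM'mk (M : Mealy Q A) (u : List A) : M.DM' := M.conD.mk' (FreeMonoid.ofList u)

/-- `M` is self-invertible if `P_M` is a group. -/
def SelfInvertible (M : Mealy Q A) : Prop :=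
  ∀ x : M.PM, ∃ y : M.PM, x * y = 1 ∧ y * x = 1

/-- The enriched automaton of an invertible automaton: states `Q ⊕ Q`, where `Sum.inl q` is `q`
and `Sum.inr q` is the formal inverse `q⁻¹`; `τ̃(q,a) = τ(q,a)` and
`τ̃(q⁻¹, q·a) = (a, (q@a)⁻¹)`. -/
noncomputable def enriched [Nonempty A] (M : Mealy Q A) : Mealy (Q ⊕ Q) A where
  step := fun p b =>
    match p with
    | Sum.inl q => (M.o q b, Sum.inl (M.t q b))
    | Sum.inr q =>
        (Function.invFun (M.o q) b, Sum.inr (M.t q (Function.invFun (M.o q) b)))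

/-- The monoid `Δ_M` presented by generators `Q ⊔ A` and relations `q a = (q·a)(q@a)`. -/
def deltaCon (M : Mealy Q A) : Con (FreeMonoid (Q ⊕ A)) :=
  conGen (fun w₁ w₂ => ∃ (q : Q) (a : A),
    w₁ = FreeMonoid.of (Sum.inl q) * FreeMonoid.of (Sum.inr a) ∧
    w₂ = FreeMonoid.of (Sum.inr (M.o q a)) * FreeMonoid.of (Sum.inl (M.t q a)))

end Mealy

/-- Evaluation of a positive word in the letters `y` (for `true`) and `z` (for `false`). -/
def evalPair {S : Type*} [Monoid S] (y z : S) : List Bool → S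
  | [] => 1
  | b :: l => (bif b then y else z) * evalPair y z l

/-- `y` and `z` freely generate a free subsemigroup of rank two: distinct nonempty
positive words in `y, z` represent distinct elements. -/
def IsFreePair {S : Type*} [Monoid S] (y z : S) : Prop :=
  ∀ l₁ l₂ : List Bool, l₁ ≠ [] → l₂ ≠ [] →
    evalPair y z l₁ = evalPair y z l₂ → l₁ = l₂

/-- `x` has infinite order: `{x, x², x³, …}` is infinite. -/
def InfiniteOrder {S : Type*} [Monoid S] (x : S) : Prop :=
  (Set.range fun n : ℕ => x ^ (n + 1)).Infinite

/-- The length-`n` prefix of a sequence. -/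
def seqTake {A : Type*} (ξ : ℕ → A) (n : ℕ) : List A := (List.range n).map ξ

/-- The `n`-th power `u^n` of a finite word. -/
def wpow {A : Type*} (u : List A) : ℕ → List A
  | 0 => []
  | n + 1 => u ++ wpow u n

/-- The eventually periodic sequence `u v v v ⋯`. -/
noncomputable def prePeriodic {A : Type*} [Nonempty A] (u v : List A) : ℕ → A :=
  fun n => if n < u.length then u.getD n (Classical.arbitrary A)
    else v.getD ((n - u.length) % v.length) (Classical.arbitrary A)

/-- The periodic sequence `u^ω = u u u ⋯`. -/
noncomputable def periodic {A : Type*} [Nonempty A] (u : List A) : ℕ → A :=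
  prePeriodic [] u

namespace Mealy

/-- The action of a word of states on a sequence: `s · ξ` is the sequence whose
length-`n` prefix is `s · (length-`n` prefix of `ξ`)`. -/
noncomputable def actSeq {Q A : Type*} [Nonempty A] (M : Mealy Q A)
    (s : List Q) (ξ : ℕ → A) : ℕ → A :=
  fun n => (M.actW s (seqTake ξ (n + 1))).getD n (Classical.arbitrary A)

/-- The language of all prefixes of the orbit of `a^ω` under `P_M`. -/
def Lan {Q A : Type*} (M : Mealy Q A) (a : A) : Set (List A) :=
  {v | ∃ (k : ℕ) (s : List Q), v = M.actW s (List.replicate k a)}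

/-- The degree of `v` in `Lan(a)`: the number of letters `b` with `v b ∈ Lan(a)`. -/
noncomputable def deg {Q A : Type*} (M : Mealy Q A) (a : A) (v : List A) : ℕ :=
  {b : A | v ++ [b] ∈ M.Lan a}.ncard

end Mealy

/-- A language is regular if it is recognized by a deterministic finite automaton. -/
def IsRegular {A : Type*} (L : Set (List A)) : Prop :=
  ∃ (σ : Type) (_ : Fintype σ) (dfa : DFA A σ), ∀ w : List A, w ∈ dfa.accepts ↔ w ∈ L


namespace Mealy

variable {Q A : Type*}

theorem actA_length (M : Mealy Q A) (q : Q) (w : List A) :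
    (M.actA q w).length = w.length := by
  induction w generalizing q with
  | nil => rfl
  | cons a w ih => simp [actA, ih]

theorem actW_length (M : Mealy Q A) (s : List Q) (w : List A) :
    (M.actW s w).length = w.length := by
  induction s with
  | nil => rfl
  | cons q s ih => simp [actW, actA_length, ih]

theorem stW_length (M : Mealy Q A) (s : List Q) (w : List A) :
    (M.stW s w).length = s.length := by
  induction s with
  | nil => rfl
  | cons q s ih => simp [stW, ih]

theorem stW_append_states (M : Mealy Q A) (r s : List Q) (w : List A) :
    M.stW (r ++ s) w = M.stW r (M.actW s w) ++ M.stW s w := by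
  induction r with
  | nil => simp [stW]
  | cons q r ih => simp [stW, actW_append_states, ih]

theorem PMmk_append (M : Mealy Q A) (a b : List Q) :
    M.PMmk (a ++ b) = M.PMmk a * M.PMmk b := by
  simp [PMmk, FreeMonoid.ofList_append, map_mul]

theorem DMmk_append (M : Mealy Q A) (a b : List A) :
    M.DMmk (a ++ b) = M.DMmk a * M.DMmk b := by
  simp [DMmk, FreeMonoid.ofList_append, map_mul]

theorem DM'mk_append (M : Mealy Q A) (a b : List A) :
    M.DM'mk (a ++ b) = M.DM'mk a * M.DM'mk b := by
  simp [DM'mk, FreeMonoid.ofList_append, map_mul]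

theorem PMmk_nil (M : Mealy Q A) : M.PMmk ([] : List Q) = 1 := by
  simp [PMmk]

theorem PMmk_eq (M : Mealy Q A) {s t : List Q} :
    M.PMmk s = M.PMmk t ↔ ∀ w : List A, M.actW s w = M.actW t w := by
  constructor
  · intro h w
    have : M.conQ (FreeMonoid.ofList s) (FreeMonoid.ofList t) := by
      rw [← Con.eq]; exact h
    simpa [FreeMonoid.toList_ofList] using this w
  · intro h
    have : M.conQ (FreeMonoid.ofList s) (FreeMonoid.ofList t) := by
      intro w; simpa [FreeMonoid.toList_ofList] using h w
    exact (Con.eq _).mpr this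

theorem DMmk_eq (M : Mealy Q A) {a b : List A} :
    M.DMmk a = M.DMmk b ↔ ∀ s : List Q, M.stW s a = M.stW s b := by
  constructor
  · intro h s
    have : M.conA (FreeMonoid.ofList a) (FreeMonoid.ofList b) := by
      rw [← Con.eq]; exact h
    simpa [FreeMonoid.toList_ofList] using this s
  · intro h
    have : M.conA (FreeMonoid.ofList a) (FreeMonoid.ofList b) := by
      intro s; simpa [FreeMonoid.toList_ofList] using h s
    exact (Con.eq _).mpr this

theorem DM'mk_eq (M : Mealy Q A) {a b : List A} :
    M.DM'mk a = M.DM'mk b ↔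
      ∀ (s : List Q) (w : List A), M.actW (M.stW s a) w = M.actW (M.stW s b) w := by
  constructor
  · intro h s w
    have : M.conD (FreeMonoid.ofList a) (FreeMonoid.ofList b) := by
      rw [← Con.eq]; exact h
    simpa [FreeMonoid.toList_ofList] using this s w
  · intro h
    have : M.conD (FreeMonoid.ofList a) (FreeMonoid.ofList b) := by
      intro s w; simpa [FreeMonoid.toList_ofList] using h s w
    exact (Con.eq _).mpr this

theorem DMmk_wpow (M : Mealy Q A) (u : List A) (n : ℕ) :
    M.DMmk (wpow u n) = (M.DMmk u) ^ n := by
  induction n with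
  | zero =>
    simp [wpow, DMmk]
  | succ n ih => rw [wpow, DMmk_append, ih, ← pow_succ']

theorem DM'mk_wpow (M : Mealy Q A) (u : List A) (n : ℕ) :
    M.DM'mk (wpow u n) = (M.DM'mk u) ^ n := by
  induction n with
  | zero =>
    simp [wpow, DM'mk]
  | succ n ih => rw [wpow, DM'mk_append, ih, ← pow_succ']

/-- The canonical projection `D_M → D'_M`. -/
def toDM' (M : Mealy Q A) : M.DM →* M.DM' :=
  M.conA.lift M.conD.mk' (by
    intro a b hab
    simp only [Con.ker_rel]
    apply (Con.eq _).mpr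
    intro s w
    rw [hab s])

theorem toDM'_mk (M : Mealy Q A) (a : List A) : M.toDM' (M.DMmk a) = M.DM'mk a :=
  Con.lift_mk' _ _

end Mealy

theorem wpow_add {A : Type*} (u : List A) (a b : ℕ) :
    wpow u (a + b) = wpow u a ++ wpow u b := by
  induction a with
  | zero => simp [wpow]
  | succ a ih => rw [Nat.succ_add, wpow, wpow, ih, List.append_assoc]


theorem seqTake_length {A : Type*} (ξ : ℕ → A) (n : ℕ) : (seqTake ξ n).length = n := by
  simp [seqTake]

theorem seqTake_getElem {A : Type*} (ξ : ℕ → A) {n k : ℕ} (h : k < n) :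
    (seqTake ξ n)[k]'(by simpa [seqTake] using h) = ξ k := by
  simp [seqTake]

theorem seqTake_add {A : Type*} (ξ : ℕ → A) (i j : ℕ) :
    seqTake ξ (i + j) = seqTake ξ i ++ (List.range j).map (fun k => ξ (i + k)) := by
  simp [seqTake, List.range_add, List.map_map, Function.comp_def]

namespace Mealy

variable {Q A : Type*}

theorem actSeq_eq [Nonempty A] (M : Mealy Q A) (s : List Q) (ξ : ℕ → A) {k m : ℕ}
    (h : k < m) :
    M.actSeq s ξ k = (M.actW s (seqTake ξ m)).getD k (Classical.arbitrary A) := by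
  have hm : m = (k + 1) + (m - k - 1) := by omega
  rw [actSeq]
  conv_rhs => rw [hm, seqTake_add, actW_append]
  have hlen : k < (M.actW s (seqTake ξ (k+1))).length := by
    simp [actW_length, seqTake_length]
  rw [List.getD_eq_getElem _ _ hlen,
    List.getD_eq_getElem _ _ (by simp [actW_length, seqTake_length]; omega),
    List.getElem_append_left hlen]

theorem seqTake_actSeq [Nonempty A] (M : Mealy Q A) (s : List Q) (ξ : ℕ → A) (m : ℕ) :
    seqTake (M.actSeq s ξ) m = M.actW s (seqTake ξ m) := by
  apply List.ext_getElem
  · simp [seqTake_length, actW_length]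
  · intro k h1 h2
    rw [seqTake_getElem _ (by simpa [seqTake_length] using h1),
      M.actSeq_eq s ξ (by simpa [seqTake_length] using h1),
      List.getD_eq_getElem _ _ h2]

theorem orbit_finite [Finite A] (M : Mealy Q A) (W : List A) :
    {w : List A | ∃ s : List Q, w = M.actW s W}.Finite := by
  apply Set.Finite.subset (List.finite_length_eq A W.length)
  rintro w ⟨s, rfl⟩
  exact M.actW_length s W

end Mealy

theorem periodic_apply {A : Type*} [Nonempty A] (u : List A) (k : ℕ) :
    periodic u k = u.getD (k % u.length) (Classical.arbitrary A) := by
  simp [periodic, prePeriodic]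

theorem seqTake_periodic {A : Type*} [Nonempty A] (u : List A) (n : ℕ) :
    seqTake (periodic u) (n * u.length) = wpow u n := by
  induction n with
  | zero => simp [seqTake, wpow]
  | succ n ih =>
    have h1 : (n + 1) * u.length = u.length + n * u.length := by ring
    rw [h1, seqTake_add, wpow]
    congr 1
    · apply List.ext_getElem
      · simp [seqTake_length]
      · intro k h1 h2
        rw [seqTake_getElem _ (by simpa [seqTake_length] using h1), periodic_apply,
          Nat.mod_eq_of_lt h2, List.getD_eq_getElem _ _ h2]
    · rw [← ih]
      apply List.ext_getElem
      · simp [seqTake_length]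
      · intro k hk1 hk2
        have hk : k < n * u.length := by simpa using hk1
        simp only [List.getElem_map, List.getElem_range]
        rw [seqTake_getElem _ hk, periodic_apply, periodic_apply, Nat.add_mod_left]

section AbstractGroup

variable {G : Type*} [Group G]

/-- The subgroup of "periods" of a normalized function `T : G → G`. -/
def Hsub (T : G → G) (hT1 : T 1 = 1) : Subgroup G where
  carrier := {p | ∀ k, T (k * p) = T k * T p}
  one_mem' := by intro k; simp [hT1]
  mul_mem' := by
    intro p p' hp hp' k
    have h1 : T (k * (p * p')) = T (k * p) * T p' := by
      rw [← mul_assoc]; exact hp' (k * p)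
    rw [h1, hp k, hp' p, mul_assoc]
  inv_mem' := by
    intro p hp
    have hinv : T p⁻¹ = (T p)⁻¹ := by
      have h := hp p⁻¹
      rw [inv_mul_cancel, hT1] at h
      exact eq_inv_of_mul_eq_one_left h.symm
    intro k
    have h2 := hp (k * p⁻¹)
    rw [mul_assoc, inv_mul_cancel, mul_one] at h2
    rw [hinv, h2]
    group

theorem mem_Hsub {T : G → G} {hT1 : T 1 = 1} {p : G} :
    p ∈ Hsub T hT1 ↔ ∀ k, T (k * p) = T k * T p := Iff.rfl

theorem Hsub_inv {T : G → G} {hT1 : T 1 = 1} {p : G} (hp : p ∈ Hsub T hT1) :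
    T p⁻¹ = (T p)⁻¹ := by
  have h2 := mem_Hsub.mp hp p⁻¹
  rw [inv_mul_cancel, hT1] at h2
  exact eq_inv_of_mul_eq_one_left h2.symm

theorem Hsub_coset_iff {T : G → G} {hT1 : T 1 = 1} {a b : G} :
    (∀ h, T (h * a) * (T a)⁻¹ = T (h * b) * (T b)⁻¹) ↔ a⁻¹ * b ∈ Hsub T hT1 := by
  constructor
  · intro hab
    have key : ∀ k, T (k * (a⁻¹ * b)) = T k * ((T a)⁻¹ * T b) := by
      intro k
      have h := hab (k * a⁻¹)
      rw [mul_assoc, inv_mul_cancel, mul_one] at h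
      have h2 : T (k * a⁻¹ * b) = T k * ((T a)⁻¹ * T b) := by
        have h3 := congrArg (· * T b) h
        simpa [mul_assoc] using h3.symm
      rw [← mul_assoc]
      exact h2
    have k1 := key 1
    rw [one_mul, hT1, one_mul] at k1
    intro k
    rw [key k, k1]
  · intro hp h
    have h1 := mem_Hsub.mp hp (h * a)
    have h2 := mem_Hsub.mp hp a
    rw [mul_assoc, show a * (a⁻¹ * b) = b by group] at h1
    rw [show a * (a⁻¹ * b) = b by group] at h2
    rw [h1, h2]
    group

/-- The subgroup of "right periods" of a family of functions `ψ : X → G → Y`. -/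
def Hsub2 {X Y : Type*} (ψ : X → G → Y) : Subgroup G where
  carrier := {p | ∀ x h, ψ x (h * p) = ψ x h}
  one_mem' := by intro x h; simp
  mul_mem' := by
    intro p p' hp hp' x h
    rw [← mul_assoc, hp' x (h * p), hp x h]
  inv_mem' := by
    intro p hp x h
    have := hp x (h * p⁻¹)
    rw [mul_assoc, inv_mul_cancel, mul_one] at this
    exact this.symm

theorem Hsub2_coset_iff {X Y : Type*} {ψ : X → G → Y} {a b : G} :
    (∀ x h, ψ x (h * a) = ψ x (h * b)) ↔ a⁻¹ * b ∈ Hsub2 ψ := by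
  constructor
  · intro hab x h
    have h1 := hab x (h * a⁻¹)
    rw [mul_assoc, inv_mul_cancel, mul_one] at h1
    rw [h1, mul_assoc]
  · intro hp x h
    have h1 := hp x (h * a)
    rw [mul_assoc, show a * (a⁻¹ * b) = b by group] at h1
    exact h1.symm

/-- Any family of subgroups of uniformly bounded index contains a common
finite-index subgroup, provided the group is generated by a finite set. -/
theorem exists_finiteIndex_le {ι : Type*} [Finite ι] (S : ι → G)
    (hS : Submonoid.closure (Set.range S) = ⊤) (C : ℕ) (H : ℕ → Subgroup G)
    (hidx : ∀ n, (H n).index ≤ C) (h0 : ∀ n, (H n).index ≠ 0) :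
    ∃ K : Subgroup G, K.FiniteIndex ∧ ∀ n, K ≤ H n := by
  haveI : Finite (G →* Equiv.Perm (Fin C)) := by
    apply Finite.of_injective (fun (φ : G →* Equiv.Perm (Fin C)) => (fun i => φ (S i)))
    intro φ₁ φ₂ hφ
    apply MonoidHom.ext
    intro x
    have hx : x ∈ Submonoid.closure (Set.range S) := hS ▸ Submonoid.mem_top x
    induction hx using Submonoid.closure_induction with
    | mem y hy =>
      obtain ⟨i, rfl⟩ := hy
      exact congrFun hφ i
    | one => simp
    | mul y z hy hz ihy ihz => rw [map_mul, map_mul, ihy, ihz]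
  refine ⟨⨅ φ : G →* Equiv.Perm (Fin C), φ.ker, Subgroup.finiteIndex_iInf fun φ => inferInstance,
    fun n => ?_⟩
  haveI : (H n).FiniteIndex := ⟨h0 n⟩
  haveI : Finite (G ⧸ H n) := (H n).finite_quotient_of_finiteIndex
  haveI : Fintype (G ⧸ H n) := Fintype.ofFinite _
  have hcard : Fintype.card (G ⧸ H n) ≤ Fintype.card (Fin C) := by
    rw [Fintype.card_fin, ← Nat.card_eq_fintype_card, ← Subgroup.index_eq_card]
    exact hidx n
  obtain ⟨e⟩ := Function.Embedding.nonempty_of_card_le hcard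
  set φ₀ : G →* Equiv.Perm (Fin C) :=
    (Equiv.Perm.viaEmbeddingHom e).comp (MulAction.toPermHom G (G ⧸ H n)) with hφ₀
  refine le_trans (iInf_le _ φ₀) ?_
  intro g hg
  have h1 : MulAction.toPermHom G (G ⧸ H n) g = 1 := by
    apply Equiv.Perm.viaEmbeddingHom_injective e
    rw [map_one]
    exact hg
  have h2 : g • ((1 : G) : G ⧸ H n) = ((1 : G) : G ⧸ H n) := by
    have := congrArg (fun (π : Equiv.Perm (G ⧸ H n)) => π ((1 : G) : G ⧸ H n)) h1
    simpa [MulAction.toPermHom] using this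
  have h3 : ((g * 1 : G) : G ⧸ H n) = ((1 : G) : G ⧸ H n) := by
    rw [← h2]; rfl
  have h4 := (QuotientGroup.eq).mp h3
  simpa using (H n).inv_mem ((H n).inv_mem h4)

/-- If `f` factors through a function with finite range, its range is finite. -/
theorem range_finite_of_factor {β γ : Type*} [Nonempty β] (f : ℕ → β) (F : ℕ → γ)
    (hF : (Set.range F).Finite) (h : ∀ n m, F n = F m → f n = f m) :
    (Set.range f).Finite := by
  classical
  have : ∀ c : γ, ∃ b : β, ∀ n, F n = c → f n = b := by
    intro c
    by_cases hc : ∃ n, F n = c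
    · obtain ⟨n, hn⟩ := hc
      exact ⟨f n, fun m hm => h m n (hm.trans hn.symm)⟩
    · exact ⟨Classical.arbitrary β, fun n hn => absurd ⟨n, hn⟩ hc⟩
  choose g hgspec using this
  have hsub : Set.range f ⊆ g '' (Set.range F) := by
    rintro b ⟨n, rfl⟩
    exact ⟨F n, ⟨n, rfl⟩, (hgspec (F n) n rfl).symm⟩
  exact Set.Finite.subset (hF.image g) hsub

end AbstractGroup

namespace Mealy

variable {Q A : Type*}

/-- The group structure on `P_M` for a self-invertible automaton. -/
@[reducible]
noncomputable def pmGroup (M : Mealy Q A) (hg : M.SelfInvertible) : Group M.PM :=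
  { (inferInstance : Monoid M.PM) with
    inv := fun x => Classical.choose (hg x)
    inv_mul_cancel := fun x => (Classical.choose_spec (hg x)).2 }

/-- The map `q ↦ [q @ W]` from `P_M` to `P_M`, induced by taking sections at `W`. -/
noncomputable def secT (M : Mealy Q A) (W : List A) (x : M.PM) : M.PM :=
  Con.liftOn x (fun fm => M.PMmk (M.stW (FreeMonoid.toList fm) W)) (by
    intro r r' h
    apply (PMmk_eq M).mpr
    intro w
    exact M.actW_stW_congr (fun w' => h w') W w)

theorem secT_mk (M : Mealy Q A) (W : List A) (s : List Q) :
    M.secT W (M.PMmk s) = M.PMmk (M.stW s W) := by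
  show Con.liftOn ((FreeMonoid.ofList s : FreeMonoid Q) : M.PM) _ _ = _
  rw [Con.liftOn_coe]
  simp [FreeMonoid.toList_ofList]

theorem secT_one (M : Mealy Q A) (W : List A) : M.secT W 1 = 1 := by
  rw [← M.PMmk_nil, secT_mk]
  show M.PMmk [] = M.PMmk []
  rfl

/-- The map `(q, x) ↦ q @ (x · W)`. -/
noncomputable def phiQ (M : Mealy Q A) (W : List A) (q : Q) (x : M.PM) : Q :=
  Con.liftOn x (fun fm => M.stA q (M.actW (FreeMonoid.toList fm) W)) (by
    intro r r' h
    have h2 : M.actW (FreeMonoid.toList r) W = M.actW (FreeMonoid.toList r') W := h W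
    simp only [h2])

theorem phiQ_mk (M : Mealy Q A) (W : List A) (q : Q) (s : List Q) :
    M.phiQ W q (M.PMmk s) = M.stA q (M.actW s W) := by
  show Con.liftOn ((FreeMonoid.ofList s : FreeMonoid Q) : M.PM) _ _ = _
  rw [Con.liftOn_coe]
  simp [FreeMonoid.toList_ofList]

theorem PMmk_surjective (M : Mealy Q A) : Function.Surjective M.PMmk := by
  intro x
  obtain ⟨fm, rfl⟩ := Con.mk'_surjective x
  exact ⟨FreeMonoid.toList fm, by simp [PMmk]⟩

end Mealy

theorem wpow_length {A : Type*} (u : List A) (n : ℕ) :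
    (wpow u n).length = n * u.length := by
  induction n with
  | zero => simp [wpow]
  | succ n ih => simp [wpow, ih]; ring

theorem pow_eventually_periodic {Mo : Type*} [Monoid Mo] (x : Mo)
    (h : (Set.range fun n : ℕ => x ^ (n + 1)).Finite) :
    ∃ N p : ℕ, 1 ≤ N ∧ 1 ≤ p ∧ ∀ m, N ≤ m → x ^ (m + p) = x ^ m := by
  haveI := h.to_subtype
  obtain ⟨n, m, hne, heq⟩ := Finite.exists_ne_map_eq_of_infinite
    (fun n : ℕ => (⟨x ^ (n + 1), ⟨n, rfl⟩⟩ : ↥(Set.range fun n : ℕ => x ^ (n + 1))))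
  have heq' : x ^ (n + 1) = x ^ (m + 1) := congrArg Subtype.val heq
  rcases Nat.lt_or_ge n m with hlt | hge
  · refine ⟨n + 1, m - n, by omega, by omega, ?_⟩
    intro k hk
    have h1 : x ^ (k + (m - n)) = x ^ (k - (n+1)) * x ^ ((m - n) + (n + 1)) := by
      rw [← pow_add]; congr 1; omega
    have h2 : (m - n) + (n + 1) = m + 1 := by omega
    rw [h1, h2, ← heq', ← pow_add]
    congr 1; omega
  · have hlt : m < n := by omega
    refine ⟨m + 1, n - m, by omega, by omega, ?_⟩
    intro k hk
    have h1 : x ^ (k + (n - m)) = x ^ (k - (m+1)) * x ^ ((n - m) + (m + 1)) := by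
      rw [← pow_add]; congr 1; omega
    have h2 : (n - m) + (m + 1) = n + 1 := by omega
    rw [h1, h2, heq', ← pow_add]
    congr 1; omega

namespace Mealy

variable {Q A : Type*}

/-- A choice of representative state word for each element of `P_M`. -/
noncomputable def pmRep (M : Mealy Q A) (x : M.PM) : List Q :=
  Classical.choose (M.PMmk_surjective x)

theorem pmRep_spec (M : Mealy Q A) (x : M.PM) : M.PMmk (M.pmRep x) = x :=
  Classical.choose_spec (M.PMmk_surjective x)

theorem conA_act (M : Mealy Q A) {a b : List A}
    (h : ∀ r : List Q, M.stW r a = M.stW r b) (t : List Q) (r : List Q) :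
    M.stW r (M.actW t a) = M.stW r (M.actW t b) := by
  have h1 : M.stW r (M.actW t a) ++ M.stW t a = M.stW r (M.actW t b) ++ M.stW t b := by
    rw [← M.stW_append_states, ← M.stW_append_states]
    exact h (r ++ t)
  rw [h t] at h1
  exact List.append_inj_left h1 (by rw [M.stW_length, M.stW_length])

theorem conD_act (M : Mealy Q A) (hg : M.SelfInvertible) {a b : List A}
    (h : ∀ (r : List Q) (w : List A), M.actW (M.stW r a) w = M.actW (M.stW r b) w)
    (t : List Q) (r : List Q) (w : List A) :
    M.actW (M.stW r (M.actW t a)) w = M.actW (M.stW r (M.actW t b)) w := by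
  obtain ⟨y, hy1, _⟩ := hg (M.PMmk (M.stW t a))
  obtain ⟨z, rfl⟩ := M.PMmk_surjective y
  have hz1 : M.PMmk (M.stW t a ++ z) = M.PMmk [] := by
    rw [M.PMmk_append, hy1, M.PMmk_nil]
  have hw : M.actW (M.stW t a) (M.actW z w) = w := by
    have h2 := (M.PMmk_eq.mp hz1) w
    rwa [M.actW_append_states] at h2
  have e1 := h (r ++ t) (M.actW z w)
  rw [M.stW_append_states, M.stW_append_states, M.actW_append_states,
    M.actW_append_states] at e1
  have h3 : M.actW (M.stW t b) (M.actW z w) = w := by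
    rw [← h t (M.actW z w)]; exact hw
  rw [hw, h3] at e1
  exact e1

end Mealy

namespace Mealy

variable {Q A : Type*}

theorem orbitn_sub [Nonempty A] (M : Mealy Q A) (u : List A) (n : ℕ) :
    {w : List A | ∃ s : List Q, w = M.actW s (wpow u n)} ⊆
      (fun ξ : ℕ → A => seqTake ξ (n * u.length)) ''
        {ξ : ℕ → A | ∃ s : List Q, ξ = M.actSeq s (periodic u)} := by
  rintro w ⟨s, rfl⟩
  refine ⟨M.actSeq s (periodic u), ⟨s, rfl⟩, ?_⟩
  show seqTake (M.actSeq s (periodic u)) (n * u.length) = _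
  rw [M.seqTake_actSeq, seqTake_periodic]

theorem imp71 [Nonempty A] [Finite A] (M : Mealy Q A) {u : List A} (hu : u ≠ [])
    (h7 : (Set.range fun n : ℕ => (M.DM'mk u) ^ (n + 1)).Finite) :
    Set.Finite {ξ : ℕ → A | ∃ s : List Q, ξ = M.actSeq s (periodic u)} := by
  obtain ⟨N, p, hN, hp, hper⟩ := pow_eventually_periodic _ h7
  have hL : 1 ≤ u.length := List.length_pos_iff.mpr hu
  have hDa : ∀ (s : List Q) (w : List A),
      M.actW (M.stW s (wpow u N)) w = M.actW (M.stW s (wpow u (N + p))) w := by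
    have hh : M.DM'mk (wpow u N) = M.DM'mk (wpow u (N + p)) := by
      rw [M.DM'mk_wpow, M.DM'mk_wpow]
      exact (hper N le_rfl).symm
    exact fun s w => (M.DM'mk_eq.mp hh) s w
  have key : ∀ (s : List Q) (j : ℕ),
      M.actSeq s (periodic u) (N * u.length + j) = M.actSeq s (periodic u) ((N + p) * u.length + j) := by
    intro s j
    set a := j + 1 with ha
    set n := N + p + a with hn
    have haL : a ≤ a * u.length := Nat.le_mul_of_pos_right a hL
    have hb1 : N * u.length + j < n * u.length := by
      have h' : n * u.length = N * u.length + p * u.length + a * u.length := by rw [hn]; ring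
      omega
    have hb2 : (N + p) * u.length + j < n * u.length := by
      have h' : n * u.length = (N + p) * u.length + a * u.length := by rw [hn]; ring
      omega
    rw [M.actSeq_eq s _ hb1, M.actSeq_eq s _ hb2, seqTake_periodic]
    have hsplit1 : wpow u n = wpow u N ++ wpow u (a + p) := by
      rw [show n = N + (a + p) from by omega, wpow_add]
    have hsplit2 : wpow u n = wpow u (N + p) ++ wpow u a := by
      rw [show n = (N + p) + a from by omega, wpow_add]
    have len1 : (M.actW s (wpow u N)).length = N * u.length := by
      rw [M.actW_length, wpow_length]
    have len2 : (M.actW s (wpow u (N + p))).length = (N + p) * u.length := by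
      rw [M.actW_length, wpow_length]
    have v1 : (M.actW s (wpow u n)).getD (N * u.length + j) (Classical.arbitrary A) =
        (M.actW (M.stW s (wpow u N)) (wpow u a)).getD j (Classical.arbitrary A) := by
      rw [hsplit1, M.actW_append, List.getD_append_right _ _ _ _ (by rw [len1]; omega),
        len1, Nat.add_sub_cancel_left, wpow_add, M.actW_append,
        List.getD_append _ _ _ _ (by rw [M.actW_length, wpow_length]; omega)]
    have v2 : (M.actW s (wpow u n)).getD ((N + p) * u.length + j) (Classical.arbitrary A) =
        (M.actW (M.stW s (wpow u (N + p))) (wpow u a)).getD j (Classical.arbitrary A) := by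
      rw [hsplit2, M.actW_append, List.getD_append_right _ _ _ _ (by rw [len2]; omega),
        len2, Nat.add_sub_cancel_left]
    rw [v1, v2, ← hDa s (wpow u a)]
  have hpL : 1 ≤ p * u.length := Nat.one_le_iff_ne_zero.mpr (by positivity)
  apply Set.Finite.of_finite_image
    (f := fun (ξ : ℕ → A) (i : Fin ((N + p) * u.length)) => ξ i.val)
  · exact Set.toFinite _
  · rintro ξ ⟨s, rfl⟩ ζ ⟨t, rfl⟩ hfe
    funext k
    induction k using Nat.strong_induction_on with
    | _ k ih =>
      rcases Nat.lt_or_ge k ((N + p) * u.length) with hk | hk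
      · exact congrFun hfe ⟨k, hk⟩
      · have hk2 : k = (N + p) * u.length + (k - (N + p) * u.length) := by omega
        have hlt : N * u.length + (k - (N + p) * u.length) < k := by
          have h' : (N + p) * u.length = N * u.length + p * u.length := by ring
          omega
        rw [hk2, ← key s _, ← key t _]
        exact ih _ hlt


theorem imp64 [Finite A] (M : Mealy Q A) (u : List A)
    (h6 : (Set.range fun n : ℕ => (M.DMmk u) ^ (n + 1)).Finite) :
    Set.Finite (M.DMmk '' {w : List A | ∃ (n : ℕ) (s : List Q), w = M.actW s (wpow u n)}) := by
  obtain ⟨N, p, hN, hp, hper⟩ := pow_eventually_periodic _ h6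
  have hbig : {w : List A | ∃ (n : ℕ) (s : List Q), w = M.actW s (wpow u n)} =
      ⋃ n : ℕ, {w | ∃ s : List Q, w = M.actW s (wpow u n)} := by
    ext w; simp [Set.mem_iUnion]
  rw [hbig, Set.image_iUnion]
  set I : ℕ → Set M.DM := fun n => M.DMmk '' {w | ∃ s, w = M.actW s (wpow u n)} with hI
  have hstep : ∀ m, N + p ≤ m → I m = I (m - p) := by
    intro m hm
    have hcls : M.DMmk (wpow u m) = M.DMmk (wpow u (m - p)) := by
      rw [M.DMmk_wpow, M.DMmk_wpow]
      conv_lhs => rw [show m = (m - p) + p from by omega]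
      exact hper (m - p) (by omega)
    have hA : ∀ r : List Q, M.stW r (wpow u m) = M.stW r (wpow u (m - p)) :=
      fun r => M.DMmk_eq.mp hcls r
    have hpt : ∀ s : List Q,
        M.DMmk (M.actW s (wpow u m)) = M.DMmk (M.actW s (wpow u (m - p))) :=
      fun s => M.DMmk_eq.mpr (fun r => M.conA_act hA s r)
    apply Set.ext
    intro z
    constructor
    · rintro ⟨w, ⟨s, rfl⟩, rfl⟩; exact ⟨_, ⟨s, rfl⟩, (hpt s).symm⟩
    · rintro ⟨w, ⟨s, rfl⟩, rfl⟩; exact ⟨_, ⟨s, rfl⟩, hpt s⟩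
  have hred : ∀ n, ∃ k, k < N + p ∧ I n = I k := by
    intro n
    induction n using Nat.strong_induction_on with
    | _ n ih =>
      by_cases h : n < N + p
      · exact ⟨n, h, rfl⟩
      · obtain ⟨k, hk, he⟩ := ih (n - p) (by omega)
        exact ⟨k, hk, (hstep n (by omega)).trans he⟩
  apply Set.Finite.subset
    (Set.Finite.biUnion (Set.finite_Iio (N + p)) (fun k _ => (M.orbit_finite (wpow u k)).image _))
  rintro z hz
  rw [Set.mem_iUnion] at hz
  obtain ⟨n, hn⟩ := hz
  obtain ⟨k, hk, he⟩ := hred n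
  have hn' : z ∈ I n := hn
  rw [he] at hn'
  exact Set.mem_biUnion hk hn'

theorem imp75 [Finite A] (M : Mealy Q A) (hg : M.SelfInvertible) (u : List A)
    (h7 : (Set.range fun n : ℕ => (M.DM'mk u) ^ (n + 1)).Finite) :
    Set.Finite (M.DM'mk '' {w : List A | ∃ (n : ℕ) (s : List Q), w = M.actW s (wpow u n)}) := by
  obtain ⟨N, p, hN, hp, hper⟩ := pow_eventually_periodic _ h7
  have hbig : {w : List A | ∃ (n : ℕ) (s : List Q), w = M.actW s (wpow u n)} =
      ⋃ n : ℕ, {w | ∃ s : List Q, w = M.actW s (wpow u n)} := by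
    ext w; simp [Set.mem_iUnion]
  rw [hbig, Set.image_iUnion]
  set I : ℕ → Set M.DM' := fun n => M.DM'mk '' {w | ∃ s, w = M.actW s (wpow u n)} with hI
  have hstep : ∀ m, N + p ≤ m → I m = I (m - p) := by
    intro m hm
    have hcls : M.DM'mk (wpow u m) = M.DM'mk (wpow u (m - p)) := by
      rw [M.DM'mk_wpow, M.DM'mk_wpow]
      conv_lhs => rw [show m = (m - p) + p from by omega]
      exact hper (m - p) (by omega)
    have hD : ∀ (r : List Q) (w : List A),
        M.actW (M.stW r (wpow u m)) w = M.actW (M.stW r (wpow u (m - p))) w :=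
      fun r w => M.DM'mk_eq.mp hcls r w
    have hpt : ∀ s : List Q,
        M.DM'mk (M.actW s (wpow u m)) = M.DM'mk (M.actW s (wpow u (m - p))) :=
      fun s => M.DM'mk_eq.mpr (fun r w => M.conD_act hg hD s r w)
    apply Set.ext
    intro z
    constructor
    · rintro ⟨w, ⟨s, rfl⟩, rfl⟩; exact ⟨_, ⟨s, rfl⟩, (hpt s).symm⟩
    · rintro ⟨w, ⟨s, rfl⟩, rfl⟩; exact ⟨_, ⟨s, rfl⟩, hpt s⟩
  have hred : ∀ n, ∃ k, k < N + p ∧ I n = I k := by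
    intro n
    induction n using Nat.strong_induction_on with
    | _ n ih =>
      by_cases h : n < N + p
      · exact ⟨n, h, rfl⟩
      · obtain ⟨k, hk, he⟩ := ih (n - p) (by omega)
        exact ⟨k, hk, (hstep n (by omega)).trans he⟩
  apply Set.Finite.subset
    (Set.Finite.biUnion (Set.finite_Iio (N + p)) (fun k _ => (M.orbit_finite (wpow u k)).image _))
  rintro z hz
  rw [Set.mem_iUnion] at hz
  obtain ⟨n, hn⟩ := hz
  obtain ⟨k, hk, he⟩ := hred n
  have hn' : z ∈ I n := hn
  rw [he] at hn'
  exact Set.mem_biUnion hk hn'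

end Mealy

namespace Mealy

variable {Q A : Type*}

theorem mem_Hsub2' {G X Y : Type*} [Group G] {ψ : X → G → Y} {p : G} :
    p ∈ Hsub2 ψ ↔ ∀ x h, ψ x (h * p) = ψ x h := Iff.rfl

theorem pm_gen (M : Mealy Q A) :
    Submonoid.closure (Set.range fun q : Q => M.PMmk [q]) = ⊤ := by
  have hall : ∀ l : List Q, M.PMmk l ∈ Submonoid.closure (Set.range fun q : Q => M.PMmk [q]) := by
    intro l
    induction l with
    | nil =>
      rw [M.PMmk_nil]
      exact one_mem _
    | cons q l ih =>
      have h : M.PMmk (q :: l) = M.PMmk [q] * M.PMmk l := M.PMmk_append [q] l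
      rw [h]
      exact mul_mem (Submonoid.subset_closure ⟨q, rfl⟩) ih
  rw [eq_top_iff]
  intro x _
  obtain ⟨l, rfl⟩ := M.PMmk_surjective x
  exact hall l

theorem imp26 [Finite Q] [Finite A] (M : Mealy Q A) (hg : M.SelfInvertible) (u : List A)
    (h2 : ∃ C : ℕ, ∀ n : ℕ,
      (M.DMmk '' {w : List A | ∃ s : List Q, w = M.actW s (wpow u n)}).ncard ≤ C) :
    (Set.range fun n : ℕ => (M.DMmk u) ^ (n + 1)).Finite := by
  classical
  letI : Group M.PM := M.pmGroup hg
  obtain ⟨C, hC⟩ := h2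
  set W : ℕ → List A := fun n => wpow u n with hW
  set O : ℕ → Set (List A) := fun n => {w : List A | ∃ s : List Q, w = M.actW s (W n)} with hO
  -- the key characterization of ~A-classes within the orbit of `u^n`
  have keyiff : ∀ (n : ℕ) (s t : List Q),
      M.DMmk (M.actW s (W n)) = M.DMmk (M.actW t (W n)) ↔
        ∀ (q : Q) (h : M.PM),
          M.phiQ (W n) q (h * M.PMmk s) = M.phiQ (W n) q (h * M.PMmk t) := by
    intro n s t
    rw [M.DMmk_eq]
    constructor
    · intro hst q h
      obtain ⟨r, rfl⟩ := M.PMmk_surjective h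
      rw [← M.PMmk_append, ← M.PMmk_append, M.phiQ_mk, M.phiQ_mk,
        M.actW_append_states, M.actW_append_states]
      have h2 := hst (q :: r)
      simp only [stW] at h2
      exact (List.cons_eq_cons.mp h2).1
    · intro hq r
      induction r with
      | nil => rfl
      | cons q r ih =>
        show M.stA q (M.actW r (M.actW s (W n))) :: M.stW r (M.actW s (W n)) =
          M.stA q (M.actW r (M.actW t (W n))) :: M.stW r (M.actW t (W n))
        have hh := hq q (M.PMmk r)
        rw [← M.PMmk_append, ← M.PMmk_append, M.phiQ_mk, M.phiQ_mk,
          M.actW_append_states, M.actW_append_states] at hh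
        rw [hh, ih]
  -- the subgroups of `P_M`
  set Hn : ℕ → Subgroup M.PM :=
    fun n => Hsub2 (fun (q : Q) (x : M.PM) => M.phiQ (W n) q x) with hHn
  have coset_iff : ∀ (n : ℕ) (s t : List Q),
      M.DMmk (M.actW s (W n)) = M.DMmk (M.actW t (W n)) ↔
        (M.PMmk s)⁻¹ * M.PMmk t ∈ Hn n := by
    intro n s t
    rw [keyiff n s t]
    exact Hsub2_coset_iff
  -- finiteness of the quotients and bounded index
  have hfin : ∀ n : ℕ, ∃ f : (M.PM ⧸ Hn n) → ↥(M.DMmk '' O n), Function.Injective f := by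
    intro n
    have hwd : ∀ c : M.PM ⧸ Hn n, M.DMmk (M.actW (M.pmRep c.out) (W n)) ∈ M.DMmk '' O n := by
      intro c
      exact ⟨_, ⟨M.pmRep c.out, rfl⟩, rfl⟩
    refine ⟨fun c => ⟨_, hwd c⟩, ?_⟩
    intro c₁ c₂ hcc
    have h12 : M.DMmk (M.actW (M.pmRep c₁.out) (W n)) =
        M.DMmk (M.actW (M.pmRep c₂.out) (W n)) := congrArg Subtype.val hcc
    have hmem := (coset_iff n _ _).mp h12
    rw [M.pmRep_spec, M.pmRep_spec] at hmem
    have : (QuotientGroup.mk c₁.out : M.PM ⧸ Hn n) = QuotientGroup.mk c₂.out :=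
      (QuotientGroup.eq).mpr hmem
    rwa [QuotientGroup.out_eq', QuotientGroup.out_eq'] at this
  have hidx : ∀ n : ℕ, (Hn n).index ≤ C ∧ (Hn n).index ≠ 0 := by
    intro n
    obtain ⟨f, hf⟩ := hfin n
    haveI : Finite ↥(M.DMmk '' O n) := (((M.orbit_finite (W n))).image _).to_subtype
    haveI : Finite (M.PM ⧸ Hn n) := Finite.of_injective f hf
    constructor
    · rw [Subgroup.index_eq_card]
      calc Nat.card (M.PM ⧸ Hn n) ≤ Nat.card ↥(M.DMmk '' O n) :=
            Nat.card_le_card_of_injective f hf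
        _ = (M.DMmk '' O n).ncard := Nat.card_coe_set_eq _
        _ ≤ C := hC n
    · rw [Subgroup.index_eq_card]
      exact Nat.card_ne_zero.mpr ⟨⟨QuotientGroup.mk 1⟩, inferInstance⟩
  -- a common finite index subgroup
  obtain ⟨K, hKfi, hKle⟩ := exists_finiteIndex_le (fun q : Q => M.PMmk [q]) (M.pm_gen) C Hn
    (fun n => (hidx n).1) (fun n => (hidx n).2)
  haveI : K.FiniteIndex := hKfi
  haveI : Finite (M.PM ⧸ K) := K.finite_quotient_of_finiteIndex
  -- the finite data determining the class of `u^n`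
  set F : ℕ → (Q → (M.PM ⧸ K) → Q) := fun n q c => M.phiQ (W n) q c.out with hF
  have hfac : ∀ n m : ℕ, F n = F m → (fun k : ℕ => (M.DMmk u) ^ k) n = (fun k => (M.DMmk u) ^ k) m := by
    intro n m hFeq
    have hφ : ∀ (q : Q) (h : M.PM), M.phiQ (W n) q h = M.phiQ (W m) q h := by
      intro q h
      set c : M.PM ⧸ K := QuotientGroup.mk h with hc
      have hpmem : c.out⁻¹ * h ∈ K := by
        apply (QuotientGroup.eq).mp
        rw [QuotientGroup.out_eq']
      have hdec : c.out * (c.out⁻¹ * h) = h := by group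
      have e1 : M.phiQ (W n) q h = M.phiQ (W n) q c.out := by
        conv_lhs => rw [← hdec]
        exact (mem_Hsub2'.mp (hKle n hpmem)) q c.out
      have e2 : M.phiQ (W m) q h = M.phiQ (W m) q c.out := by
        conv_lhs => rw [← hdec]
        exact (mem_Hsub2'.mp (hKle m hpmem)) q c.out
      rw [e1, e2]
      exact congrFun (congrFun hFeq q) c
    have hcls : M.DMmk (W n) = M.DMmk (W m) := by
      rw [M.DMmk_eq]
      intro r
      induction r with
      | nil => rfl
      | cons q r ih =>
        show M.stA q (M.actW r (W n)) :: M.stW r (W n) =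
          M.stA q (M.actW r (W m)) :: M.stW r (W m)
        have h1 : M.stA q (M.actW r (W n)) = M.stA q (M.actW r (W m)) := by
          rw [← M.phiQ_mk, ← M.phiQ_mk]
          exact hφ q (M.PMmk r)
        rw [h1, ih]
    show (M.DMmk u) ^ n = (M.DMmk u) ^ m
    rw [← M.DMmk_wpow, ← M.DMmk_wpow]
    exact hcls
  have hFr : (Set.range F).Finite := Set.Finite.subset Set.finite_univ (Set.subset_univ _)
  have hrange : (Set.range fun k : ℕ => (M.DMmk u) ^ k).Finite :=
    range_finite_of_factor _ F hFr hfac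
  apply hrange.subset
  rintro z ⟨n, rfl⟩
  exact ⟨n + 1, rfl⟩

end Mealy

namespace Mealy

variable {Q A : Type*}

theorem imp37 [Finite Q] [Finite A] (M : Mealy Q A) (hg : M.SelfInvertible) (u : List A)
    (h3 : ∃ C : ℕ, ∀ n : ℕ,
      (M.DM'mk '' {w : List A | ∃ s : List Q, w = M.actW s (wpow u n)}).ncard ≤ C) :
    (Set.range fun n : ℕ => (M.DM'mk u) ^ (n + 1)).Finite := by
  classical
  letI : Group M.PM := M.pmGroup hg
  obtain ⟨C, hC⟩ := h3
  set W : ℕ → List A := fun n => wpow u n with hW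
  set O : ℕ → Set (List A) := fun n => {w : List A | ∃ s : List Q, w = M.actW s (W n)} with hO
  have hsec : ∀ (n : ℕ) (r s : List Q),
      M.secT (W n) (M.PMmk r * M.PMmk s) =
        M.PMmk (M.stW r (M.actW s (W n))) * M.secT (W n) (M.PMmk s) := by
    intro n r s
    rw [← M.PMmk_append, M.secT_mk, M.stW_append_states, M.PMmk_append, M.secT_mk]
  have keyiff : ∀ (n : ℕ) (s t : List Q),
      M.DM'mk (M.actW s (W n)) = M.DM'mk (M.actW t (W n)) ↔
        ∀ h : M.PM,
          M.secT (W n) (h * M.PMmk s) * (M.secT (W n) (M.PMmk s))⁻¹ =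
            M.secT (W n) (h * M.PMmk t) * (M.secT (W n) (M.PMmk t))⁻¹ := by
    intro n s t
    rw [M.DM'mk_eq]
    constructor
    · intro hst h
      obtain ⟨r, rfl⟩ := M.PMmk_surjective h
      rw [hsec n r s, hsec n r t, mul_inv_cancel_right, mul_inv_cancel_right]
      exact M.PMmk_eq.mpr (hst r)
    · intro hq r w
      have h1 := hq (M.PMmk r)
      rw [hsec n r s, hsec n r t, mul_inv_cancel_right, mul_inv_cancel_right] at h1
      exact (M.PMmk_eq.mp h1) w
  set Hn : ℕ → Subgroup M.PM := fun n => Hsub (M.secT (W n)) (M.secT_one (W n)) with hHn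
  have coset_iff : ∀ (n : ℕ) (s t : List Q),
      M.DM'mk (M.actW s (W n)) = M.DM'mk (M.actW t (W n)) ↔
        (M.PMmk s)⁻¹ * M.PMmk t ∈ Hn n := by
    intro n s t
    rw [keyiff n s t]
    exact Hsub_coset_iff
  have hfin : ∀ n : ℕ, ∃ f : (M.PM ⧸ Hn n) → ↥(M.DM'mk '' O n), Function.Injective f := by
    intro n
    have hwd : ∀ c : M.PM ⧸ Hn n, M.DM'mk (M.actW (M.pmRep c.out) (W n)) ∈ M.DM'mk '' O n := by
      intro c
      exact ⟨_, ⟨M.pmRep c.out, rfl⟩, rfl⟩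
    refine ⟨fun c => ⟨_, hwd c⟩, ?_⟩
    intro c₁ c₂ hcc
    have h12 : M.DM'mk (M.actW (M.pmRep c₁.out) (W n)) =
        M.DM'mk (M.actW (M.pmRep c₂.out) (W n)) := congrArg Subtype.val hcc
    have hmem := (coset_iff n _ _).mp h12
    rw [M.pmRep_spec, M.pmRep_spec] at hmem
    have hqq : (QuotientGroup.mk c₁.out : M.PM ⧸ Hn n) = QuotientGroup.mk c₂.out :=
      (QuotientGroup.eq).mpr hmem
    rwa [QuotientGroup.out_eq', QuotientGroup.out_eq'] at hqq
  have hidx : ∀ n : ℕ, (Hn n).index ≤ C ∧ (Hn n).index ≠ 0 := by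
    intro n
    obtain ⟨f, hf⟩ := hfin n
    haveI : Finite ↥(M.DM'mk '' O n) := (((M.orbit_finite (W n))).image _).to_subtype
    haveI : Finite (M.PM ⧸ Hn n) := Finite.of_injective f hf
    constructor
    · rw [Subgroup.index_eq_card]
      calc Nat.card (M.PM ⧸ Hn n) ≤ Nat.card ↥(M.DM'mk '' O n) :=
            Nat.card_le_card_of_injective f hf
        _ = (M.DM'mk '' O n).ncard := Nat.card_coe_set_eq _
        _ ≤ C := hC n
    · rw [Subgroup.index_eq_card]
      exact Nat.card_ne_zero.mpr ⟨⟨QuotientGroup.mk 1⟩, inferInstance⟩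
  obtain ⟨K, hKfi, hKle⟩ := exists_finiteIndex_le (fun q : Q => M.PMmk [q]) (M.pm_gen) C Hn
    (fun n => (hidx n).1) (fun n => (hidx n).2)
  haveI : Monoid.FG M.PM :=
    Monoid.fg_iff.mpr ⟨Set.range (fun q : Q => M.PMmk [q]), M.pm_gen, Set.finite_range _⟩
  haveI : Group.FG M.PM := Group.fg_iff_monoid_fg.mpr inferInstance
  haveI : K.FiniteIndex := hKfi
  haveI : Finite (M.PM ⧸ K) := K.finite_quotient_of_finiteIndex
  have hKfg : K.FG := (Group.fg_iff_subgroup_fg K).mp inferInstance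
  obtain ⟨Sfin, hSclos⟩ := hKfg
  set F : ℕ → ((M.PM ⧸ K) → M.PM) × (↥Sfin → M.PM) :=
    fun n => (fun c => M.secT (W n) c.out, fun s => M.secT (W n) (s : M.PM)) with hF
  have hval : ∀ (x : M.PM) (n : ℕ),
      M.secT (W n) x ∈ M.PMmk '' {l : List Q | l.length = (M.pmRep x).length} := by
    intro x n
    refine ⟨M.stW (M.pmRep x) (W n), M.stW_length _ _, ?_⟩
    rw [← M.secT_mk, M.pmRep_spec]
  have hF1fin : (Set.range fun n : ℕ => (fun c : M.PM ⧸ K => M.secT (W n) c.out)).Finite := by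
    apply Set.Finite.subset (Set.Finite.pi'
      (t := fun c : M.PM ⧸ K => M.PMmk '' {l : List Q | l.length = (M.pmRep c.out).length})
      (fun c => (List.finite_length_eq Q _).image _))
    rintro f ⟨n, rfl⟩
    intro c
    exact hval c.out n
  have hF2fin : (Set.range fun n : ℕ => (fun s : ↥Sfin => M.secT (W n) (s : M.PM))).Finite := by
    apply Set.Finite.subset (Set.Finite.pi'
      (t := fun s : ↥Sfin => M.PMmk '' {l : List Q | l.length = (M.pmRep (s : M.PM)).length})
      (fun s => (List.finite_length_eq Q _).image _))
    rintro f ⟨n, rfl⟩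
    intro s
    exact hval (s : M.PM) n
  have hFr : (Set.range F).Finite := by
    apply Set.Finite.subset (hF1fin.prod hF2fin)
    rintro z ⟨n, rfl⟩
    exact ⟨⟨n, rfl⟩, ⟨n, rfl⟩⟩
  have hfac : ∀ n m : ℕ,
      F n = F m → (fun k : ℕ => (M.DM'mk u) ^ k) n = (fun k : ℕ => (M.DM'mk u) ^ k) m := by
    intro n m hFeq
    have hF1 := congrArg Prod.fst hFeq
    have hF2 := congrArg Prod.snd hFeq
    have hKeq : ∀ p ∈ K, M.secT (W n) p = M.secT (W m) p := by
      intro p hp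
      rw [← hSclos] at hp
      induction hp using Subgroup.closure_induction with
      | mem x hx => exact congrFun hF2 ⟨x, hx⟩
      | one => rw [M.secT_one, M.secT_one]
      | mul x y hx hy ihx ihy =>
        have hyK : y ∈ K := hSclos ▸ hy
        rw [mem_Hsub.mp (hKle n hyK) x, mem_Hsub.mp (hKle m hyK) x, ihx, ihy]
      | inv x hx ih =>
        have hxK : x ∈ K := hSclos ▸ hx
        rw [Hsub_inv (hKle n hxK), Hsub_inv (hKle m hxK), ih]
    have hall : ∀ x : M.PM, M.secT (W n) x = M.secT (W m) x := by
      intro x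
      set c : M.PM ⧸ K := QuotientGroup.mk x with hc
      have hpmem : c.out⁻¹ * x ∈ K := by
        apply (QuotientGroup.eq).mp
        rw [QuotientGroup.out_eq']
      have hdec : c.out * (c.out⁻¹ * x) = x := by group
      calc M.secT (W n) x = M.secT (W n) (c.out * (c.out⁻¹ * x)) := by rw [hdec]
        _ = M.secT (W n) c.out * M.secT (W n) (c.out⁻¹ * x) :=
            mem_Hsub.mp (hKle n hpmem) c.out
        _ = M.secT (W m) c.out * M.secT (W m) (c.out⁻¹ * x) := by
            have e3 : M.secT (W n) c.out = M.secT (W m) c.out := congrFun hF1 c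
            rw [e3, hKeq _ hpmem]
        _ = M.secT (W m) (c.out * (c.out⁻¹ * x)) :=
            (mem_Hsub.mp (hKle m hpmem) c.out).symm
        _ = M.secT (W m) x := by rw [hdec]
    have hcls : M.DM'mk (W n) = M.DM'mk (W m) := by
      rw [M.DM'mk_eq]
      intro s w
      have h1 := hall (M.PMmk s)
      rw [M.secT_mk, M.secT_mk] at h1
      exact (M.PMmk_eq.mp h1) w
    show (M.DM'mk u) ^ n = (M.DM'mk u) ^ m
    rw [← M.DM'mk_wpow, ← M.DM'mk_wpow]
    exact hcls
  have hrange : (Set.range fun k : ℕ => (M.DM'mk u) ^ k).Finite :=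
    range_finite_of_factor _ F hFr hfac
  apply hrange.subset
  rintro z ⟨n, rfl⟩
  exact ⟨n + 1, rfl⟩

end Mealy

/-- For a self-invertible Mealy automaton `M` and a nonempty word `u ∈ A*`,
the following are equivalent: (1) the orbit `P_M·u^ω` is finite; (2) the number of
`~A`-classes met by `{s·uⁿ : s ∈ Q*}` is bounded independently of `n`; (3) the same for
`~D`-classes; (4) `⋃ₙ {s·uⁿ}` meets only finitely many `~A`-classes; (5) the same for
`~D`-classes; (6) the image of `u` in `D_M` has finite order; (7) the image of `u` in
`D'_M` has finite order. -/
theorem stmt17 {Q A : Type*} [Fintype Q] [Nonempty Q] [Fintype A] [Nonempty A]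
    (M : Mealy Q A) (hg : M.SelfInvertible) (u : List A) (hu : u ≠ []) :
    [ Set.Finite {ξ : ℕ → A | ∃ s : List Q, ξ = M.actSeq s (periodic u)},
      ∃ C : ℕ, ∀ n : ℕ,
        (M.DMmk '' {w : List A | ∃ s : List Q, w = M.actW s (wpow u n)}).ncard ≤ C,
      ∃ C : ℕ, ∀ n : ℕ,
        (M.DM'mk '' {w : List A | ∃ s : List Q, w = M.actW s (wpow u n)}).ncard ≤ C,
      Set.Finite
        (M.DMmk '' {w : List A | ∃ (n : ℕ) (s : List Q), w = M.actW s (wpow u n)}),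
      Set.Finite
        (M.DM'mk '' {w : List A | ∃ (n : ℕ) (s : List Q), w = M.actW s (wpow u n)}),
      Set.Finite (Set.range fun n : ℕ => (M.DMmk u) ^ (n + 1)),
      Set.Finite (Set.range fun n : ℕ => (M.DM'mk u) ^ (n + 1)) ].TFAE := by
  have himg : ∀ S : Set (List A), M.DM'mk '' S = M.toDM' '' (M.DMmk '' S) := by
    intro S
    rw [Set.image_image]
    apply Set.image_congr
    intro w _
    exact (M.toDM'_mk w).symm
  tfae_have 1 → 2 := by
    intro h1
    refine ⟨{ξ : ℕ → A | ∃ s : List Q, ξ = M.actSeq s (periodic u)}.ncard, fun n => ?_⟩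
    calc (M.DMmk '' {w : List A | ∃ s : List Q, w = M.actW s (wpow u n)}).ncard
        ≤ {w : List A | ∃ s : List Q, w = M.actW s (wpow u n)}.ncard :=
          Set.ncard_image_le (M.orbit_finite (wpow u n))
      _ ≤ ((fun ξ : ℕ → A => seqTake ξ (n * u.length)) ''
            {ξ : ℕ → A | ∃ s : List Q, ξ = M.actSeq s (periodic u)}).ncard :=
          Set.ncard_le_ncard (M.orbitn_sub u n) (h1.image _)
      _ ≤ {ξ : ℕ → A | ∃ s : List Q, ξ = M.actSeq s (periodic u)}.ncard :=
          Set.ncard_image_le h1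
  tfae_have 2 → 3 := by
    rintro ⟨C, hC⟩
    refine ⟨C, fun n => ?_⟩
    rw [himg]
    calc (M.toDM' '' (M.DMmk '' {w : List A | ∃ s : List Q, w = M.actW s (wpow u n)})).ncard
        ≤ (M.DMmk '' {w : List A | ∃ s : List Q, w = M.actW s (wpow u n)}).ncard :=
          Set.ncard_image_le ((M.orbit_finite (wpow u n)).image _)
      _ ≤ C := hC n
  tfae_have 3 → 7 := fun h3 => M.imp37 hg u h3
  tfae_have 7 → 1 := fun h7 => M.imp71 hu h7
  tfae_have 2 → 6 := fun h2 => M.imp26 hg u h2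
  tfae_have 6 → 7 := by
    intro h6
    apply Set.Finite.subset (h6.image M.toDM')
    rintro z ⟨n, rfl⟩
    exact ⟨(M.DMmk u) ^ (n + 1), ⟨n, rfl⟩, by rw [map_pow, M.toDM'_mk]⟩
  tfae_have 6 → 4 := fun h6 => M.imp64 u h6
  tfae_have 4 → 6 := by
    intro h4
    apply h4.subset
    rintro z ⟨n, rfl⟩
    exact ⟨wpow u (n + 1), ⟨n + 1, ([] : List Q), rfl⟩, M.DMmk_wpow u (n + 1)⟩
  tfae_have 7 → 5 := fun h7 => M.imp75 hg u h7
  tfae_have 5 → 7 := by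
    intro h5
    apply h5.subset
    rintro z ⟨n, rfl⟩
    exact ⟨wpow u (n + 1), ⟨n + 1, ([] : List Q), rfl⟩, M.DM'mk_wpow u (n + 1)⟩
  tfae_finish


end AutGrp
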